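/- Let λ > 0, p ≥ 0, and h : ℕ → ℝ with h(x) = O(x^p). Let f_h be the Stein solution f_h(x) = ((x−1)!/λ^x)·Σ_{i=x}^∞ (λ^i/i!)·(h(i) − P_λ(h)) for x ≥ 1. Then f_h(x) = O(x^{p−1}); in particular f_h(x) = O(x^p). -/

import Mathlib

open Filter

set_option maxHeartbeats 1000000

noncomputable section

/-- Poisson-`λ` expectation of `h`: `P_λ(h) = e^{-λ} Σ_{i≥0} λ^i h(i)/i!`. -/
def poissonExp (lam : ℝ) (h : ℕ → ℝ) : ℝ :=
  Real.exp (-lam) * ∑' i : ℕ, lam ^ i * h i / (i.factorial : ℝ)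

/-- The Stein solution `f_h(x) = ((x−1)!/λ^x)·Σ_{i=x}^∞ (λ^i/i!)(h(i) − P_λ(h))`
(shifted index `i = x + j`). -/
def steinSol (lam : ℝ) (h : ℕ → ℝ) (x : ℕ) : ℝ :=
  ((x - 1).factorial : ℝ) / lam ^ x *
    ∑' j : ℕ, lam ^ (x + j) * (h (x + j) - poissonExp lam h) / ((x + j).factorial : ℝ)

private lemma factAux (x j : ℕ) (hx : 1 ≤ x) :
    (x - 1).factorial * x ^ (j + 1) ≤ (x + j).factorial := by
  induction j with
  | zero =>
    have hx' : (x - 1) + 1 = x := Nat.succ_pred_eq_of_pos hx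
    have he : (x + 0).factorial = x * (x - 1).factorial := by
      rw [Nat.add_zero, ← hx', Nat.factorial_succ, hx']
    rw [he, pow_one, Nat.mul_comm]
  | succ j ih =>
    calc (x - 1).factorial * x ^ (j + 1 + 1)
        = (x - 1).factorial * x ^ (j + 1) * x := by ring
      _ ≤ (x + j).factorial * x := Nat.mul_le_mul_right _ ih
      _ ≤ (x + j).factorial * (x + j + 1) := Nat.mul_le_mul_left _ (by omega)
      _ = (x + (j + 1)).factorial := by
          rw [show x + (j + 1) = (x + j) + 1 by omega, Nat.factorial_succ]; ring

/-- If `h(x) = O(x^p)` with `p ≥ 0`, then the Stein solution satisfies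
`f_h(x) = O(x^{p−1})`; in particular `f_h(x) = O(x^p)`. -/
theorem steinSol_isBigO (lam : ℝ) (hlam : 0 < lam) (p : ℝ) (hp : 0 ≤ p) (h : ℕ → ℝ)
    (hh : (fun x : ℕ => h x) =O[atTop] fun x : ℕ => (x : ℝ) ^ p) :
    ((fun x : ℕ => steinSol lam h x) =O[atTop] fun x : ℕ => (x : ℝ) ^ (p - 1)) ∧
      ((fun x : ℕ => steinSol lam h x) =O[atTop] fun x : ℕ => (x : ℝ) ^ p) := by
  set P := poissonExp lam h with hPdef
  -- basic facts
  have hone : ∀ i : ℕ, (1 : ℝ) ≤ ((i : ℝ) + 1) ^ p := fun i =>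
    Real.one_le_rpow (by linarith [Nat.cast_nonneg (α := ℝ) i]) hp
  have honeb : ∀ i : ℕ, (0 : ℝ) ≤ ((i : ℝ) + 1) ^ p := fun i => le_trans zero_le_one (hone i)
  -- Step A : global bound on h - P
  rw [Asymptotics.isBigO_iff] at hh
  obtain ⟨c, hc⟩ := hh
  rw [eventually_atTop] at hc
  obtain ⟨N, hN⟩ := hc
  obtain ⟨M, hM⟩ := ((Finset.range N).image fun i => |h i|).exists_le
  set C1 : ℝ := max c 0 + max M 0 + |P| with hC1def
  have hC1 : 0 ≤ C1 := by
    have := le_max_right c 0; have := le_max_right M 0; have := abs_nonneg P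
    rw [hC1def]; linarith
  have hg : ∀ i : ℕ, |h i - P| ≤ C1 * ((i : ℝ) + 1) ^ p := by
    intro i
    have hstep : |h i| ≤ (max c 0 + max M 0) * ((i : ℝ) + 1) ^ p := by
      rcases le_or_gt N i with hi | hi
      · have := hN i hi
        rw [Real.norm_eq_abs, Real.norm_eq_abs,
          abs_of_nonneg (Real.rpow_nonneg (Nat.cast_nonneg i) p)] at this
        have h1 : c * (i : ℝ) ^ p ≤ max c 0 * (i : ℝ) ^ p :=
          mul_le_mul_of_nonneg_right (le_max_left c 0) (Real.rpow_nonneg (Nat.cast_nonneg i) p)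
        have h2 : max c 0 * (i : ℝ) ^ p ≤ max c 0 * ((i : ℝ) + 1) ^ p :=
          mul_le_mul_of_nonneg_left
            (Real.rpow_le_rpow (Nat.cast_nonneg i) (by linarith) hp) (le_max_right c 0)
        nlinarith [mul_nonneg (le_max_right M 0) (honeb i)]
      · have hMi : |h i| ≤ M := hM _ (Finset.mem_image_of_mem _ (Finset.mem_range.2 hi))
        have h2 : max M 0 ≤ max M 0 * ((i : ℝ) + 1) ^ p := by
          nlinarith [le_max_right M 0, hone i]
        nlinarith [hMi, le_max_left M 0, h2, mul_nonneg (le_max_right c 0) (honeb i)]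
    have hPb : |P| ≤ |P| * ((i : ℝ) + 1) ^ p := by nlinarith [abs_nonneg P, hone i]
    calc |h i - P| ≤ |h i| + |P| := abs_sub _ _
      _ ≤ (max c 0 + max M 0) * ((i : ℝ) + 1) ^ p + |P| * ((i : ℝ) + 1) ^ p := by linarith
      _ = C1 * ((i : ℝ) + 1) ^ p := by rw [hC1def]; ring
  -- Step D : summable majorant
  set m : ℕ := ⌈p⌉₊ with hmdef
  set S : ℕ → ℝ := fun j => ((j : ℝ) + 2) ^ m * (1 / 2 : ℝ) ^ j with hSdef
  have hS : Summable S := by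
    have base : Summable (fun n : ℕ => (n : ℝ) ^ m * (1 / 2 : ℝ) ^ n) :=
      summable_pow_mul_geometric_of_norm_lt_one m (by norm_num)
    have shifted : Summable (fun j : ℕ => ((j + 2 : ℕ) : ℝ) ^ m * (1 / 2 : ℝ) ^ (j + 2)) :=
      (summable_nat_add_iff 2).2 base
    have := shifted.mul_left 4
    apply this.congr
    intro j
    simp only [hSdef]
    push_cast
    ring
  set K : ℝ := ∑' j, S j with hKdef
  have hK : 0 ≤ K := tsum_nonneg fun j => by
    simp only [hSdef]; positivity
  -- Step E : the key bound
  have key : ∀ x : ℕ, 1 ≤ x → 2 * lam ≤ (x : ℝ) →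
      ‖steinSol lam h x‖ ≤ C1 * K * (x : ℝ) ^ (p - 1) := by
    intro x hx1 hx2
    set xr : ℝ := (x : ℝ) with hxrdef
    have hxr1 : (1 : ℝ) ≤ xr := by rw [hxrdef]; exact_mod_cast hx1
    have hxr0 : (0 : ℝ) < xr := by linarith
    have hlx : lam ^ x ≠ 0 := (pow_pos hlam x).ne'
    set T : ℕ → ℝ := fun j =>
      lam ^ (x + j) * (h (x + j) - P) / ((x + j).factorial : ℝ) with hTdef
    have hTb : ∀ j : ℕ,
        ‖((x - 1).factorial : ℝ) / lam ^ x * T j‖ ≤ C1 * xr ^ (p - 1) * S j := by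
      intro j
      have hfj : ((x + j).factorial : ℝ) ≠ 0 := Nat.cast_ne_zero.2 (Nat.factorial_ne_zero _)
      have e1 : ((x - 1).factorial : ℝ) / lam ^ x * T j =
          lam ^ j * ((x - 1).factorial : ℝ) / ((x + j).factorial : ℝ) * (h (x + j) - P) := by
        simp only [hTdef]
        rw [pow_add]
        field_simp
      have hA : lam ^ j * ((x - 1).factorial : ℝ) / ((x + j).factorial : ℝ) ≤ (1 / 2) ^ j / xr := by
        have hfact : ((x - 1).factorial : ℝ) * xr ^ (j + 1) ≤ ((x + j).factorial : ℝ) := by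
          calc ((x - 1).factorial : ℝ) * xr ^ (j + 1)
              = (((x - 1).factorial * x ^ (j + 1) : ℕ) : ℝ) := by push_cast; ring
            _ ≤ _ := Nat.cast_le.2 (factAux x j hx1)
        have hxp : (0 : ℝ) < xr ^ (j + 1) := pow_pos hxr0 _
        have hfpos : (0 : ℝ) < ((x + j).factorial : ℝ) := by positivity
        have h1 : ((x - 1).factorial : ℝ) / ((x + j).factorial : ℝ) ≤ 1 / xr ^ (j + 1) := by
          rw [div_le_div_iff₀ hfpos hxp]
          linarith
        calc lam ^ j * ((x - 1).factorial : ℝ) / ((x + j).factorial : ℝ)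
            = lam ^ j * (((x - 1).factorial : ℝ) / ((x + j).factorial : ℝ)) := by ring
          _ ≤ lam ^ j * (1 / xr ^ (j + 1)) :=
              mul_le_mul_of_nonneg_left h1 (pow_nonneg hlam.le j)
          _ = (lam / xr) ^ j / xr := by rw [pow_succ, div_pow]; field_simp
          _ ≤ (1 / 2) ^ j / xr := by
              have hq : lam / xr ≤ 1 / 2 := by
                rw [div_le_div_iff₀ hxr0 (by norm_num : (0:ℝ) < 2)]
                linarith
              have hpow : (lam / xr) ^ j ≤ (1 / 2 : ℝ) ^ j :=
                pow_le_pow_left₀ (by positivity) hq j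
              rw [div_eq_mul_inv, div_eq_mul_inv]
              exact mul_le_mul_of_nonneg_right hpow (by positivity)
      have hApos : (0 : ℝ) ≤ lam ^ j * ((x - 1).factorial : ℝ) / ((x + j).factorial : ℝ) := by
        positivity
      have hB : |h (x + j) - P| ≤ C1 * (xr ^ p * ((j : ℝ) + 2) ^ m) := by
        calc |h (x + j) - P| ≤ C1 * (((x + j : ℕ) : ℝ) + 1) ^ p := hg _
          _ ≤ C1 * (xr * ((j : ℝ) + 2)) ^ p := by
              apply mul_le_mul_of_nonneg_left _ hC1
              apply Real.rpow_le_rpow (by positivity) _ hp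
              push_cast
              nlinarith [Nat.cast_nonneg (α := ℝ) j]
          _ = C1 * (xr ^ p * ((j : ℝ) + 2) ^ p) := by
              rw [Real.mul_rpow hxr0.le (by positivity)]
          _ ≤ C1 * (xr ^ p * ((j : ℝ) + 2) ^ m) := by
              apply mul_le_mul_of_nonneg_left _ hC1
              apply mul_le_mul_of_nonneg_left _ (Real.rpow_nonneg hxr0.le p)
              rw [← Real.rpow_natCast]
              exact Real.rpow_le_rpow_of_exponent_le
                (by linarith [Nat.cast_nonneg (α := ℝ) j]) (Nat.le_ceil p)
      rw [e1, Real.norm_eq_abs, abs_mul, abs_of_nonneg hApos]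
      calc lam ^ j * ((x - 1).factorial : ℝ) / ((x + j).factorial : ℝ) * |h (x + j) - P|
          ≤ ((1 / 2) ^ j / xr) * (C1 * (xr ^ p * ((j : ℝ) + 2) ^ m)) := by
            apply mul_le_mul hA hB (abs_nonneg _)
            positivity
        _ = C1 * xr ^ (p - 1) * S j := by
            rw [Real.rpow_sub hxr0, Real.rpow_one]
            simp only [hSdef]
            field_simp
    have hrw : steinSol lam h x = ∑' j, ((x - 1).factorial : ℝ) / lam ^ x * T j := by
      rw [steinSol, tsum_mul_left]
    rw [hrw]
    have hSum : HasSum (fun j => C1 * xr ^ (p - 1) * S j) (C1 * xr ^ (p - 1) * K) :=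
      hS.hasSum.mul_left _
    calc ‖∑' j, ((x - 1).factorial : ℝ) / lam ^ x * T j‖
        ≤ C1 * xr ^ (p - 1) * K := tsum_of_norm_bounded hSum hTb
      _ = C1 * K * xr ^ (p - 1) := by ring
  -- conclusion
  have first : (fun x : ℕ => steinSol lam h x) =O[atTop] fun x : ℕ => (x : ℝ) ^ (p - 1) := by
    rw [Asymptotics.isBigO_iff]
    refine ⟨C1 * K, ?_⟩
    filter_upwards [eventually_ge_atTop 1,
      tendsto_natCast_atTop_atTop.eventually_ge_atTop (2 * lam)] with x hx1 hx2
    calc ‖steinSol lam h x‖ ≤ C1 * K * (x : ℝ) ^ (p - 1) := key x hx1 hx2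
      _ = C1 * K * ‖(x : ℝ) ^ (p - 1)‖ := by
          rw [Real.norm_eq_abs, abs_of_nonneg (Real.rpow_nonneg (Nat.cast_nonneg x) _)]
  have second : (fun x : ℕ => (x : ℝ) ^ (p - 1)) =O[atTop] fun x : ℕ => (x : ℝ) ^ p := by
    rw [Asymptotics.isBigO_iff]
    refine ⟨1, ?_⟩
    filter_upwards [eventually_ge_atTop 1] with x hx
    have hx1 : (1 : ℝ) ≤ (x : ℝ) := by exact_mod_cast hx
    rw [one_mul, Real.norm_eq_abs, Real.norm_eq_abs,
      abs_of_nonneg (Real.rpow_nonneg (by linarith) _),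
      abs_of_nonneg (Real.rpow_nonneg (by linarith) _)]
    exact Real.rpow_le_rpow_of_exponent_le hx1 (by linarith)
  exact ⟨first, first.trans second⟩
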